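/- Let a be an algebraic integer in the complex numbers. Then a is a root of unity if and only if for every field automorphism σ of ℂ, the complex absolute value of σ(a) equals 1. -/

import Mathlib

open Cardinal

noncomputable section KroneckerAux

/-- Variant of `IsAlgClosed.equivOfTranscendenceBasis` remembering compatibility with the
algebra maps from the common base field. -/
noncomputable def myEquivAux {R K L ι κ : Type} [Field R] [Field K] [Field L]
    [Algebra R K] [Algebra R L] [IsAlgClosed K] [IsAlgClosed L] {v : ι → K} {w : κ → L}
    (e : ι ≃ κ) (hv : IsTranscendenceBasis R v) (hw : IsTranscendenceBasis R w) :
    { σ : K ≃+* L // ∀ r : R, σ (algebraMap R K r) = algebraMap R L r } := by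
  letI := IsAlgClosed.isAlgClosure_of_transcendence_basis v hv
  letI := IsAlgClosed.isAlgClosure_of_transcendence_basis w hw
  refine ⟨IsAlgClosure.equivOfEquiv K L
    (hv.1.aevalEquiv.symm.trans ((MvPolynomial.renameEquiv R e).trans
      hw.1.aevalEquiv)).toRingEquiv, fun r => ?_⟩
  rw [IsScalarTower.algebraMap_apply R (Algebra.adjoin R (Set.range v)) K r,
    IsAlgClosure.equivOfEquiv_algebraMap]
  rw [IsScalarTower.algebraMap_apply R (Algebra.adjoin R (Set.range w)) L r]
  congr 1
  exact AlgEquiv.commutes _ r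

/-- Any two embeddings of a countable field into uncountable algebraically closed fields of
the same cardinality are related by an isomorphism of the targets. -/
theorem exists_ringEquiv_comp {F K L : Type} [Field F] [Field K] [Field L]
    [IsAlgClosed K] [IsAlgClosed L] (hF : #F ≤ ℵ₀) (hK : ℵ₀ < #K) (hKL : #K = #L)
    (φ : F →+* K) (ψ : F →+* L) : ∃ σ : K ≃+* L, ∀ x, σ (φ x) = ψ x := by
  letI : Algebra F K := φ.toAlgebra
  letI : Algebra F L := ψ.toAlgebra
  obtain ⟨s, hs⟩ := exists_isTranscendenceBasis F K
  obtain ⟨t, ht⟩ := exists_isTranscendenceBasis F L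
  have hcs := IsAlgClosed.cardinal_eq_cardinal_transcendence_basis_of_aleph0_lt' _ hs hF hK
  have hct := IsAlgClosed.cardinal_eq_cardinal_transcendence_basis_of_aleph0_lt' _ ht hF
    (hKL ▸ hK)
  obtain ⟨e⟩ := Cardinal.eq.1 (hcs.symm.trans (hKL.trans hct))
  obtain ⟨σ, hσ⟩ := myEquivAux e hs ht
  exact ⟨σ, hσ⟩

end KroneckerAux

/-- Kronecker's analytic criterion: an algebraic integer `a ∈ ℂ` is a root of unity
if and only if all its conjugates under field automorphisms of `ℂ` have absolute value `1`. -/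
theorem stmt_0 (a : ℂ) (ha : IsIntegral ℤ a) :
    (∃ n : ℕ, 0 < n ∧ a ^ n = 1) ↔ ∀ σ : ℂ ≃+* ℂ, ‖σ a‖ = 1 := by
  constructor
  · rintro ⟨n, hn, hpow⟩ σ
    have h1 : ‖σ a‖ ^ n = 1 := by
      rw [← norm_pow, ← map_pow, hpow, map_one, norm_one]
    rcases (pow_eq_one_iff_cases).1 h1 with h | h | h
    · omega
    · exact h
    · nlinarith [norm_nonneg (σ a)]
  · intro h
    set K₀ := IntermediateField.adjoin ℚ ({a} : Set ℂ) with hK₀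
    have hQa : IsIntegral ℚ a := ha.tower_top
    haveI : FiniteDimensional ℚ K₀ := IntermediateField.adjoin.finiteDimensional hQa
    haveI : NumberField K₀ := ⟨⟩
    set x : K₀ := ⟨a, IntermediateField.mem_adjoin_simple_self ℚ a⟩ with hxdef
    have hax : algebraMap K₀ ℂ x = a := rfl
    have hxint : IsIntegral ℤ x := by
      rw [← isIntegral_algebraMap_iff (algebraMap K₀ ℂ).injective, hax]; exact ha
    have hcard : #K₀ ≤ ℵ₀ := by
      have := Algebra.IsAlgebraic.cardinalMk_le_max ℚ K₀
      simpa [Cardinal.mkRat] using this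
    have hx : ∀ φ : K₀ →+* ℂ, ‖φ x‖ = 1 := by
      intro φ
      obtain ⟨σ, hσ⟩ := exists_ringEquiv_comp hcard
        (by rw [mk_complex]; exact Cardinal.aleph0_lt_continuum) rfl
        (algebraMap K₀ ℂ) φ
      have := hσ x
      rw [hax] at this
      rw [← this]
      exact h σ
    obtain ⟨n, hn, hxn⟩ := NumberField.Embeddings.pow_eq_one_of_norm_eq_one K₀ ℂ hxint hx
    refine ⟨n, hn, ?_⟩
    have := congrArg (algebraMap K₀ ℂ) hxn
    rwa [map_pow, map_one, hax] at this
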